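/- Let T = 3 and let π̃ be a positive probability vector on cells (i,j,k) ∈ (Fin r)³ that satisfies both the OQS[f] model and the marginal moment equality (ME) model. Then ∑_{i=1}^r ∑_{j=1}^r ∑_{k=1}^r π̃(i,j,k) · ( F(π̃(i,j,k)/π̃^S(i,j,k)) − F(π̃(j,i,k)/π̃^S(j,i,k)) ) = 0. -/
import Mathlib


/-- The orbit `A((i,j,k))` of a cell of an `r³` table: all coordinate permutations. -/
def A3 {r : ℕ} (c : Fin r × Fin r × Fin r) : Finset (Fin r × Fin r × Fin r) :=
  {(c.1, c.2.1, c.2.2), (c.1, c.2.2, c.2.1), (c.2.1, c.1, c.2.2),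
   (c.2.1, c.2.2, c.1), (c.2.2, c.1, c.2.1), (c.2.2, c.2.1, c.1)}

/-- The orbit average `π^S(i,j,k) = (1/#A((i,j,k))) ∑_{(s,t,u) ∈ A((i,j,k))} π(s,t,u)`. -/
noncomputable def orbitAvg3 {r : ℕ} (π : Fin r × Fin r × Fin r → ℝ)
    (c : Fin r × Fin r × Fin r) : ℝ :=
  (∑ p ∈ A3 c, π p) / ((A3 c).card : ℝ)

/-- If `π̃` (positive probability vector on `(Fin r)³`) satisfies both the OQS[f]
model and the ME model, then
`∑_i ∑_j ∑_k π̃(i,j,k) (F(π̃(i,j,k)/π̃^S(i,j,k)) − F(π̃(j,i,k)/π̃^S(j,i,k))) = 0`. -/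
theorem OQSf_ME_weighted_sum_zero
    (r : ℕ) (hr : 2 ≤ r)
    (u : Fin r → ℝ) (humono : Monotone u)
    (hune : u ⟨0, by omega⟩ < u ⟨r - 1, by omega⟩)
    (f : ℝ → ℝ) (hconv : StrictConvexOn ℝ (Set.Ioi 0) f)
    (hdiff : ∀ x ∈ Set.Ioi (0 : ℝ), DifferentiableAt ℝ f x) (hf1 : f 1 = 0)
    (F : ℝ → ℝ) (hF : F = deriv f)
    (π : Fin r × Fin r × Fin r → ℝ) (hpos : ∀ c, 0 < π c) (hsum : ∑ c, π c = 1)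
    -- π̃ satisfies the OQS[f] model:
    (hOQS : ∃ (β₁ β₂ β₃ : ℝ) (ψ : Fin r × Fin r × Fin r → ℝ),
      (∀ c, ∀ p ∈ A3 c, ψ p = ψ c) ∧
      ∀ i j k : Fin r, F (π (i, j, k) / orbitAvg3 π (i, j, k)) =
        β₁ * u i + β₂ * u j + β₃ * u k + ψ (i, j, k))
    -- π̃ satisfies the ME model:
    (hME₁ : ∑ i, u i * (∑ j, ∑ k, π (i, j, k)) = ∑ j, u j * (∑ i, ∑ k, π (i, j, k)))
    (hME₂ : ∑ j, u j * (∑ i, ∑ k, π (i, j, k)) = ∑ k, u k * (∑ i, ∑ j, π (i, j, k))) :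
    ∑ i, ∑ j, ∑ k, π (i, j, k) *
      (F (π (i, j, k) / orbitAvg3 π (i, j, k)) -
       F (π (j, i, k) / orbitAvg3 π (j, i, k))) = 0 := by
  obtain ⟨β₁, β₂, β₃, ψ, hψ, hmod⟩ := hOQS
  have hψ' : ∀ i j k : Fin r, ψ (j, i, k) = ψ (i, j, k) := by
    intro i j k
    exact hψ (i, j, k) (j, i, k) (by simp [A3])
  have key : ∀ i j k : Fin r,
      π (i, j, k) * (F (π (i, j, k) / orbitAvg3 π (i, j, k)) -
        F (π (j, i, k) / orbitAvg3 π (j, i, k)))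
      = π (i, j, k) * ((β₁ - β₂) * (u i - u j)) := by
    intro i j k
    rw [hmod i j k, hmod j i k, hψ' i j k]
    ring
  calc ∑ i, ∑ j, ∑ k, π (i, j, k) *
      (F (π (i, j, k) / orbitAvg3 π (i, j, k)) -
       F (π (j, i, k) / orbitAvg3 π (j, i, k)))
      = ∑ i, ∑ j, ∑ k, π (i, j, k) * ((β₁ - β₂) * (u i - u j)) := by
        refine Finset.sum_congr rfl fun i _ => Finset.sum_congr rfl fun j _ =>
          Finset.sum_congr rfl fun k _ => key i j k
    _ = (β₁ - β₂) * ((∑ i, u i * (∑ j, ∑ k, π (i, j, k)))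
          - (∑ j, u j * (∑ i, ∑ k, π (i, j, k)))) := by
        have hA : ∑ i, u i * (∑ j, ∑ k, π (i, j, k))
            = ∑ i, ∑ j, ∑ k, u i * π (i, j, k) := by
          simp [Finset.mul_sum]
        have hB : ∑ j, u j * (∑ i, ∑ k, π (i, j, k))
            = ∑ i, ∑ j, ∑ k, u j * π (i, j, k) := by
          simp only [Finset.mul_sum]
          exact Finset.sum_comm
        rw [hA, hB, ← Finset.sum_sub_distrib, Finset.mul_sum]
        refine Finset.sum_congr rfl fun i _ => ?_
        rw [← Finset.sum_sub_distrib, Finset.mul_sum]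
        refine Finset.sum_congr rfl fun j _ => ?_
        rw [← Finset.sum_sub_distrib, Finset.mul_sum]
        refine Finset.sum_congr rfl fun k _ => ?_
        ring
    _ = 0 := by rw [hME₁]; ring
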